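/- The Cantorval X = { ∑_{n≥1} x_n/4^n : ∀n, x_n ∈ {0,2,3,5} } ⊆ [0, 5/3] has Lebesgue measure 1. -/

import Mathlib

noncomputable def centerOfDistances (X : Set ℝ) : Set ℝ :=
  {α | 0 ≤ α ∧ ∀ x ∈ X, ∃ y ∈ X, |x - y| = α}

noncomputable def subsums (a : ℕ → ℝ) : Set ℝ :=
  {x | ∃ A : Set ℕ, x = ∑' n : A, a n}

noncomputable def cantorval : Set ℝ :=
  {x | ∃ d : ℕ → ℝ, (∀ n, d n ∈ ({0, 2, 3, 5} : Set ℝ)) ∧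
    x = ∑' n : ℕ, d n / 4 ^ (n + 1)}

open Set MeasureTheory

namespace CV

lemma dig_nonneg {d : ℝ} (h : d ∈ ({0,2,3,5} : Set ℝ)) : 0 ≤ d := by
  rcases h with rfl | rfl | rfl | h <;> norm_num
  rw [Set.mem_singleton_iff] at h; rw [h]; norm_num

lemma dig_le {d : ℝ} (h : d ∈ ({0,2,3,5} : Set ℝ)) : d ≤ 5 := by
  rcases h with rfl | rfl | rfl | h <;> norm_num
  rw [Set.mem_singleton_iff] at h; rw [h]

lemma summable_bound : Summable (fun n : ℕ => (5:ℝ) / 4 ^ (n+1)) := by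
  have : (fun n : ℕ => (5:ℝ) / 4 ^ (n+1)) = fun n => (5/4) * (1/4)^n := by
    funext n; rw [pow_succ, one_div, inv_pow]; ring
  rw [this]
  exact (summable_geometric_of_lt_one (by norm_num) (by norm_num)).mul_left _

lemma summable_digits {d : ℕ → ℝ} (h : ∀ n, d n ∈ ({0,2,3,5} : Set ℝ)) :
    Summable (fun n => d n / 4 ^ (n+1)) := by
  apply Summable.of_nonneg_of_le (fun n => div_nonneg (dig_nonneg (h n)) (by positivity))
    (fun n => div_le_div_of_nonneg_right ?_ ?_ |>.trans le_rfl) summable_bound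
  · exact dig_le (h n)
  · positivity

lemma tsum_const_dig (c : ℝ) : ∑' n : ℕ, c / 4 ^ (n+1) = c / 3 := by
  have : (fun n : ℕ => c / 4 ^ (n+1)) = fun n => (c/4) * (1/4)^n := by
    funext n; rw [pow_succ, one_div, inv_pow]; ring
  rw [this, tsum_mul_left, tsum_geometric_of_lt_one (by norm_num) (by norm_num)]
  norm_num; ring

lemma const_mem {c : ℝ} (hc : c ∈ ({0,2,3,5} : Set ℝ)) : c / 3 ∈ cantorval :=
  ⟨fun _ => c, fun _ => hc, (tsum_const_dig c).symm⟩

lemma zero_mem : (0:ℝ) ∈ cantorval := by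
  have := const_mem (show (0:ℝ) ∈ _ by norm_num); simpa using this

lemma twothirds_mem : (2/3:ℝ) ∈ cantorval := const_mem (by norm_num)

lemma one_mem : (1:ℝ) ∈ cantorval := by
  have := const_mem (show (3:ℝ) ∈ ({0,2,3,5} : Set ℝ) by norm_num); norm_num at this
  exact this

lemma fivethirds_mem : (5/3:ℝ) ∈ cantorval := const_mem (by norm_num)

lemma subset_Icc : cantorval ⊆ Set.Icc 0 (5/3) := by
  rintro x ⟨d, hd, rfl⟩
  constructor
  · exact tsum_nonneg fun n => div_nonneg (dig_nonneg (hd n)) (by positivity)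
  · calc ∑' n : ℕ, d n / 4 ^ (n+1) ≤ ∑' n : ℕ, (5:ℝ) / 4 ^ (n+1) :=
        Summable.tsum_le_tsum (fun n => div_le_div_of_nonneg_right (dig_le (hd n)) (by positivity))
          (summable_digits hd) summable_bound
      _ = 5/3 := by rw [tsum_const_dig]

lemma prepend {x e : ℝ} (hx : x ∈ cantorval) (he : e ∈ ({0,2,3,5} : Set ℝ)) :
    (e + x) / 4 ∈ cantorval := by
  obtain ⟨d, hd, rfl⟩ := hx
  refine ⟨fun n => if n = 0 then e else d (n-1), fun n => by by_cases h : n = 0 <;> simp [h, he, hd], ?_⟩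
  have hs : Summable (fun n => (if n = 0 then e else d (n-1)) / 4 ^ (n+1)) :=
    summable_digits (fun n => by by_cases h : n = 0 <;> simp [h, he, hd])
  rw [Summable.tsum_eq_zero_add hs]
  simp only [Nat.add_sub_cancel, if_neg (Nat.succ_ne_zero _), if_pos rfl]
  have : ∀ n : ℕ, d n / 4 ^ (n + 1 + 1) = (1/4) * (d n / 4 ^ (n+1)) := by
    intro n; rw [pow_succ]; ring
  simp_rw [this]
  rw [tsum_mul_left]
  norm_num; ring

lemma first_digit {x : ℝ} (hx : x ∈ cantorval) :
    ∃ e ∈ ({0,2,3,5} : Set ℝ), ∃ y ∈ cantorval, x = (e + y) / 4 := by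
  obtain ⟨d, hd, rfl⟩ := hx
  refine ⟨d 0, hd 0, ∑' n : ℕ, d (n+1) / 4 ^ (n+1), ⟨fun n => d (n+1), fun n => hd _, rfl⟩, ?_⟩
  rw [Summable.tsum_eq_zero_add (summable_digits hd)]
  have : ∀ n : ℕ, d (n+1) / 4 ^ (n + 1 + 1) = (1/4) * (d (n+1) / 4 ^ (n+1)) := by
    intro n; rw [pow_succ]; ring
  simp_rw [this]
  rw [tsum_mul_left]
  ring

lemma symm_mem {x : ℝ} (hx : x ∈ cantorval) : 5/3 - x ∈ cantorval := by
  obtain ⟨d, hd, rfl⟩ := hx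
  refine ⟨fun n => 5 - d n, fun n => ?_, ?_⟩
  · have h := hd n
    simp only [Set.mem_insert_iff, Set.mem_singleton_iff] at h ⊢
    rcases h with h | h | h | h <;> rw [h] <;> norm_num
  · have : ∀ n : ℕ, (5 - d n) / 4 ^ (n+1) = 5 / 4^(n+1) - d n / 4^(n+1) := by
      intro n; ring
    simp_rw [this]
    rw [Summable.tsum_sub summable_bound (summable_digits hd), tsum_const_dig]

end CV

namespace CV

open Set MeasureTheory

lemma isCompact_cv : IsCompact cantorval := by
  have hfin : ({0,2,3,5} : Set ℝ).Finite := Set.toFinite _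
  have hK : IsCompact (Set.pi Set.univ (fun _ : ℕ => ({0,2,3,5} : Set ℝ))) :=
    isCompact_univ_pi (fun _ => hfin.isCompact)
  have hco : ContinuousOn (fun d : ℕ → ℝ => ∑' n : ℕ, d n / 4 ^ (n+1))
      (Set.pi Set.univ (fun _ : ℕ => ({0,2,3,5} : Set ℝ))) := by
    apply continuousOn_tsum (u := fun n : ℕ => (5:ℝ)/4^(n+1))
    · intro n
      exact ((continuous_apply n).div_const _).continuousOn
    · exact summable_bound
    · intro n d hd
      have h := hd n (Set.mem_univ n)
      rw [Real.norm_eq_abs, abs_div, abs_of_nonneg (dig_nonneg h), abs_of_nonneg (by positivity : (0:ℝ) ≤ 4^(n+1))]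
      exact div_le_div_of_nonneg_right (dig_le h) (by positivity) |>.trans le_rfl
  have himg : cantorval = (fun d : ℕ → ℝ => ∑' n : ℕ, d n / 4 ^ (n+1)) ''
      (Set.pi Set.univ (fun _ : ℕ => ({0,2,3,5} : Set ℝ))) := by
    ext x
    constructor
    · rintro ⟨d, hd, rfl⟩
      exact ⟨d, fun n _ => hd n, rfl⟩
    · rintro ⟨d, hd, rfl⟩
      exact ⟨d, fun n => hd n (Set.mem_univ n), rfl⟩
  rw [himg]
  exact hK.image_of_continuousOn hco

lemma isClosed_cv : IsClosed cantorval := isCompact_cv.isClosed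

noncomputable def Wset : Set ℝ :=
  cantorval ∪ (fun x => 1 + x) '' cantorval ∪ (fun x => 2 + x) '' cantorval

lemma isClosed_W : IsClosed Wset := by
  refine IsClosed.union (IsClosed.union isClosed_cv ?_) ?_
  · exact (isCompact_cv.image (continuous_add_left 1)).isClosed
  · exact (isCompact_cv.image (continuous_add_left 2)).isClosed

lemma cv_sub_W : cantorval ⊆ Wset := fun x hx => Or.inl (Or.inl hx)

lemma step_core {x j' x' : ℝ} (hx : x ∈ cantorval) (hx' : x' ∈ ({0,2,3,5} : Set ℝ))
    (hj' : j' ∈ ({0,1,2} : Set ℝ)) {s : ℝ} (hs : s = 4*j' + x') :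
    (s + x)/4 ∈ Wset := by
  have h := prepend hx hx'
  have heq : (s + x)/4 = j' + (x' + x)/4 := by rw [hs]; ring
  rw [heq]
  rcases hj' with rfl | rfl | hj'
  · simpa using cv_sub_W h
  · exact Or.inl (Or.inr ⟨_, h, rfl⟩)
  · rw [Set.mem_singleton_iff] at hj'; subst hj'
    exact Or.inr ⟨_, h, rfl⟩

lemma mk_mem {s x : ℝ} (hx : x ∈ cantorval)
    (h : s ∈ ({2,3,4,5,6,7,8,9,10,11} : Set ℝ)) : (s + x)/4 ∈ Wset := by
  simp only [Set.mem_insert_iff, Set.mem_singleton_iff] at h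
  rcases h with rfl|rfl|rfl|rfl|rfl|rfl|rfl|rfl|rfl|rfl
  · exact step_core (j' := 0) (x' := 2) hx (by norm_num) (by norm_num) (by norm_num)
  · exact step_core (j' := 0) (x' := 3) hx (by norm_num) (by norm_num) (by norm_num)
  · exact step_core (j' := 1) (x' := 0) hx (by norm_num) (by norm_num) (by norm_num)
  · exact step_core (j' := 0) (x' := 5) hx (by norm_num) (by norm_num) (by norm_num)
  · exact step_core (j' := 1) (x' := 2) hx (by norm_num) (by norm_num) (by norm_num)
  · exact step_core (j' := 1) (x' := 3) hx (by norm_num) (by norm_num) (by norm_num)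
  · exact step_core (j' := 2) (x' := 0) hx (by norm_num) (by norm_num) (by norm_num)
  · exact step_core (j' := 1) (x' := 5) hx (by norm_num) (by norm_num) (by norm_num)
  · exact step_core (j' := 2) (x' := 2) hx (by norm_num) (by norm_num) (by norm_num)
  · exact step_core (j' := 2) (x' := 3) hx (by norm_num) (by norm_num) (by norm_num)

lemma step {e y : ℝ} (he : e ∈ ({2,3,4,5,6,7,8,9} : Set ℝ)) (hy : y ∈ Wset) :
    (e + y)/4 ∈ Wset := by
  simp only [Set.mem_insert_iff, Set.mem_singleton_iff] at he
  rcases hy with (hy | ⟨x, hx, rfl⟩) | ⟨x, hx, rfl⟩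
  · refine mk_mem hy ?_
    simp only [Set.mem_insert_iff, Set.mem_singleton_iff]
    rcases he with rfl|rfl|rfl|rfl|rfl|rfl|rfl|rfl <;> norm_num
  · have h2 : (e + (1 + x))/4 = ((e+1) + x)/4 := by ring
    rw [h2]
    refine mk_mem hx ?_
    simp only [Set.mem_insert_iff, Set.mem_singleton_iff]
    rcases he with rfl|rfl|rfl|rfl|rfl|rfl|rfl|rfl <;> norm_num
  · have h2 : (e + (2 + x))/4 = ((e+2) + x)/4 := by ring
    rw [h2]
    refine mk_mem hx ?_
    simp only [Set.mem_insert_iff, Set.mem_singleton_iff]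
    rcases he with rfl|rfl|rfl|rfl|rfl|rfl|rfl|rfl <;> norm_num

lemma choose_digit {w : ℝ} (hw : w ∈ Set.Icc (2/3 : ℝ) 3) :
    ∃ e ∈ ({2,3,4,5,6,7,8,9} : Set ℝ), 4*w - e ∈ Set.Icc (2/3 : ℝ) 3 := by
  obtain ⟨hw1, hw2⟩ := hw
  set k : ℤ := ⌊4*w - 2/3⌋ with hk
  have hk1 : (k:ℝ) ≤ 4*w - 2/3 := Int.floor_le _
  have hk2 : 4*w - 2/3 < k + 1 := Int.lt_floor_add_one _
  have hklb : 2 ≤ k := Int.le_floor.mpr (by push_cast; linarith)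
  by_cases h9 : k ≤ 9
  · refine ⟨(k:ℝ), ?_, by constructor <;> push_cast <;> linarith⟩
    interval_cases k <;> norm_num
  · push_neg at h9
    have : (10:ℝ) ≤ k := by exact_mod_cast h9
    exact ⟨9, by norm_num, by constructor <;> linarith⟩

lemma approx : ∀ n : ℕ, ∀ w ∈ Set.Icc (2/3 : ℝ) 3, ∃ y ∈ Wset, |w - y| ≤ 3/4^n := by
  intro n
  induction n with
  | zero =>
    intro w hw
    refine ⟨2/3, cv_sub_W twothirds_mem, ?_⟩
    rw [abs_le]
    obtain ⟨h1, h2⟩ := hw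
    constructor <;> norm_num <;> linarith
  | succ n ih =>
    intro w hw
    obtain ⟨e, he, hw1⟩ := choose_digit hw
    obtain ⟨y1, hy1, hd1⟩ := ih _ hw1
    refine ⟨(e + y1)/4, step he hy1, ?_⟩
    have heq : w - (e + y1)/4 = ((4*w - e) - y1)/4 := by ring
    calc |w - (e + y1)/4| = |(4*w - e) - y1|/4 := by
          rw [heq, abs_div, abs_of_pos (by norm_num : (0:ℝ) < 4)]
      _ ≤ (3/4^n)/4 := by gcongr
      _ = 3/4^(n+1) := by rw [pow_succ]; ring

lemma Icc_sub_W : Set.Icc (2/3 : ℝ) 3 ⊆ Wset := by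
  intro w hw
  rw [← isClosed_W.closure_eq]
  rw [Metric.mem_closure_iff]
  intro ε hε
  obtain ⟨n, hn⟩ := exists_pow_lt_of_lt_one (show (0:ℝ) < ε/3 by linarith) (by norm_num : (1/4:ℝ) < 1)
  obtain ⟨y, hy, hd⟩ := approx n w hw
  refine ⟨y, hy, ?_⟩
  rw [Real.dist_eq]
  have : (3:ℝ)/4^n = 3 * (1/4)^n := by rw [one_div, inv_pow]; ring
  calc |w - y| ≤ 3/4^n := hd
    _ = 3 * (1/4)^n := this
    _ < 3 * (ε/3) := by nlinarith
    _ = ε := by ring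

lemma Icc_sub_cv : Set.Icc (2/3 : ℝ) 1 ⊆ cantorval := by
  intro t ht
  obtain ⟨h1, h2⟩ := ht
  have hW := Icc_sub_W ⟨h1, by linarith⟩
  rcases hW with (h | ⟨x, hx, rfl⟩) | ⟨x, hx, rfl⟩
  · exact h
  · simp only at h1 h2
    have hx0 := (subset_Icc hx).1
    have hxx : x = 0 := by linarith
    rw [hxx]; simpa using one_mem
  · simp only at h1 h2
    have hx0 := (subset_Icc hx).1
    linarith

lemma Icc_sub_Y : Set.Icc (1:ℝ) (5/3) ⊆ cantorval ∪ (fun x => 1 + x) '' cantorval := by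
  intro t ht
  obtain ⟨h1, h2⟩ := ht
  have hW := Icc_sub_W (Set.mem_Icc.mpr ⟨show (2:ℝ)/3 ≤ t by linarith, show t ≤ (3:ℝ) by linarith⟩)
  rcases hW with (h | h) | ⟨x, hx, rfl⟩
  · exact Or.inl h
  · exact Or.inr h
  · simp only at h1 h2
    have hx0 := (subset_Icc hx).1
    linarith

end CV

namespace CV

open Set MeasureTheory ENNReal

noncomputable def Yset : Set ℝ := cantorval ∪ (fun x => 1 + x) '' cantorval

lemma affine_image (a b : ℝ) (ha : a ≠ 0) (s : Set ℝ) :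
    (fun y => a*y + b) '' s = (fun y => a⁻¹*(y-b)) ⁻¹' s := by
  ext y
  simp only [Set.mem_image, Set.mem_preimage]
  constructor
  · rintro ⟨x, hx, rfl⟩
    have : a⁻¹ * (a*x + b - b) = x := by field_simp; ring
    rwa [this]
  · intro h
    refine ⟨a⁻¹*(y-b), h, ?_⟩
    field_simp; ring

lemma vol_affine (a b : ℝ) (ha : a ≠ 0) (s : Set ℝ) :
    volume ((fun y => a*y + b) '' s) = ENNReal.ofReal |a| * volume s := by
  rw [affine_image a b ha]
  have hcomp : (fun y : ℝ => a⁻¹*(y-b)) = (fun z : ℝ => a⁻¹ * z) ∘ (fun y : ℝ => y + (-b)) := by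
    funext y; simp only [Function.comp_apply]; ring
  rw [hcomp, Set.preimage_comp]
  rw [measure_preimage_add_right volume (-b) _]
  rw [Real.volume_preimage_mul_left (inv_ne_zero ha), inv_inv]

lemma meas_affine (a b : ℝ) (ha : a ≠ 0) {s : Set ℝ} (hs : MeasurableSet s) :
    MeasurableSet ((fun y => a*y + b) '' s) := by
  rw [affine_image a b ha]
  exact hs.preimage (by fun_prop)

lemma map_eq (c : ℝ) : (fun y : ℝ => (c + y)/4) = (fun y : ℝ => (1/4)*y + c/4) := by
  funext y; ring

lemma vol_quarter (c : ℝ) (s : Set ℝ) :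
    volume ((fun y => (c + y)/4) '' s) = ENNReal.ofReal (1/4) * volume s := by
  rw [map_eq, vol_affine _ _ (by norm_num)]
  rw [abs_of_pos (by norm_num : (0:ℝ) < 1/4)]

lemma meas_cv : MeasurableSet cantorval := isClosed_cv.measurableSet

lemma meas_quarter (c : ℝ) {s : Set ℝ} (hs : MeasurableSet s) :
    MeasurableSet ((fun y => (c + y)/4) '' s) := by
  rw [map_eq]
  exact meas_affine _ _ (by norm_num) hs

lemma meas_Y : MeasurableSet Yset :=
  meas_cv.union ((isCompact_cv.image (continuous_add_left 1)).isClosed.measurableSet)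

lemma decomp_low : cantorval ∩ Set.Iio (1/2:ℝ) = (fun y => (0 + y)/4) '' cantorval := by
  ext x
  constructor
  · rintro ⟨hx, hlt⟩
    simp only [Set.mem_Iio] at hlt
    obtain ⟨e, he, y, hy, rfl⟩ := first_digit hx
    have hy0 := (subset_Icc hy).1
    rcases he with rfl | rfl | rfl | he
    · exact ⟨y, hy, rfl⟩
    · exfalso; linarith
    · exfalso; linarith
    · rw [Set.mem_singleton_iff] at he; subst he; exfalso; linarith
  · rintro ⟨y, hy, rfl⟩
    have hy5 := (subset_Icc hy).2
    refine ⟨prepend hy (by norm_num), ?_⟩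
    simp only [Set.mem_Iio]
    linarith

lemma decomp_high : cantorval ∩ Set.Ioi (7/6:ℝ) = (fun y => (5 + y)/4) '' cantorval := by
  ext x
  constructor
  · rintro ⟨hx, hlt⟩
    simp only [Set.mem_Ioi] at hlt
    obtain ⟨e, he, y, hy, rfl⟩ := first_digit hx
    have hy5 := (subset_Icc hy).2
    rcases he with rfl | rfl | rfl | he
    · exfalso; linarith
    · exfalso; linarith
    · exfalso; linarith
    · rw [Set.mem_singleton_iff] at he; subst he; exact ⟨y, hy, rfl⟩
  · rintro ⟨y, hy, rfl⟩
    have hy0 := (subset_Icc hy).1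
    refine ⟨prepend hy (by norm_num), ?_⟩
    simp only [Set.mem_Ioi]
    linarith

lemma decomp_mid : cantorval ∩ Set.Icc (1/2:ℝ) (7/6) = (fun y => (2 + y)/4) '' Yset := by
  ext x
  constructor
  · rintro ⟨hx, hge, hle⟩
    obtain ⟨e, he, y, hy, rfl⟩ := first_digit hx
    have hy0 := (subset_Icc hy).1
    have hy5 := (subset_Icc hy).2
    rcases he with rfl | rfl | rfl | he
    · exfalso; linarith
    · exact ⟨y, Or.inl hy, rfl⟩
    · refine ⟨1 + y, Or.inr ⟨y, hy, rfl⟩, ?_⟩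
      simp only
      ring
    · rw [Set.mem_singleton_iff] at he; subst he; exfalso; linarith
  · rintro ⟨z, hz, rfl⟩
    rcases hz with hz | ⟨y, hy, rfl⟩
    · have h0 := (subset_Icc hz).1
      have h5 := (subset_Icc hz).2
      exact ⟨prepend hz (by norm_num), by constructor <;> [skip; skip] <;> simp only [Set.mem_Icc] <;> linarith⟩
    · have h0 := (subset_Icc hy).1
      have h5 := (subset_Icc hy).2
      have heq : (fun y : ℝ => (2 + y) / 4) ((fun x => 1 + x) y) = (3 + y)/4 := by
        show (2 + (1 + y))/4 = (3 + y)/4; ring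
      rw [heq]
      exact ⟨prepend hy (by norm_num), Set.mem_Icc.mpr ⟨by linarith, by linarith⟩⟩

end CV

namespace CV

open Set MeasureTheory ENNReal

lemma Icc_sub_Yset : Set.Icc (2/3:ℝ) 2 ⊆ Yset := by
  intro t ht
  obtain ⟨h1, h2⟩ := ht
  by_cases hc1 : t ≤ 1
  · exact Or.inl (Icc_sub_cv ⟨h1, hc1⟩)
  by_cases hc2 : t ≤ 5/3
  · exact Icc_sub_Y ⟨by linarith, hc2⟩
  · exact Or.inr ⟨t - 1, Icc_sub_cv ⟨by linarith, by linarith⟩, by simp⟩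

lemma Y_eq : Yset = (cantorval ∩ Set.Iio (2/3:ℝ)) ∪
    (Set.Icc (2/3:ℝ) 2 ∪ ((fun x => 1 + x) '' (cantorval ∩ Set.Ioi (1:ℝ)))) := by
  apply Set.Subset.antisymm
  · rintro t (ht | ⟨x, hx, rfl⟩)
    · by_cases h : t < 2/3
      · exact Or.inl ⟨ht, h⟩
      · have h5 := (subset_Icc ht).2
        exact Or.inr (Or.inl ⟨by linarith, by linarith⟩)
    · have h0 := (subset_Icc hx).1
      by_cases h : x ≤ 1
      · exact Or.inr (Or.inl ⟨by simp only; linarith, by simp only; linarith⟩)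
      · exact Or.inr (Or.inr ⟨x, ⟨hx, by simpa using h⟩, rfl⟩)
  · rintro t (⟨ht, _⟩ | (ht | ⟨x, ⟨hx, _⟩, rfl⟩))
    · exact Or.inl ht
    · exact Icc_sub_Yset ht
    · exact Or.inr ⟨x, hx, rfl⟩

lemma gsplit : cantorval ∩ Set.Iio (2/3:ℝ) =
    ((fun y => (0 + y)/4) '' cantorval) ∪
      ((fun y => (2 + y)/4) '' (cantorval ∩ Set.Iio (2/3:ℝ))) := by
  apply Set.Subset.antisymm
  · rintro x ⟨hx, hlt⟩
    simp only [Set.mem_Iio] at hlt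
    obtain ⟨e, he, y, hy, rfl⟩ := first_digit hx
    have hy0 := (subset_Icc hy).1
    have hy5 := (subset_Icc hy).2
    rcases he with rfl | rfl | rfl | he
    · exact Or.inl ⟨y, hy, rfl⟩
    · exact Or.inr ⟨y, ⟨hy, by simp only [Set.mem_Iio]; linarith⟩, rfl⟩
    · exfalso; linarith
    · rw [Set.mem_singleton_iff] at he; subst he; exfalso; linarith
  · rintro x (⟨y, hy, rfl⟩ | ⟨y, ⟨hy, hlt⟩, rfl⟩)
    · have hy5 := (subset_Icc hy).2
      exact ⟨prepend hy (by norm_num), by simp only [Set.mem_Iio]; linarith⟩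
    · simp only [Set.mem_Iio] at hlt
      exact ⟨prepend hy (by norm_num), by simp only [Set.mem_Iio]; linarith⟩

lemma hsym : cantorval ∩ Set.Ioi (1:ℝ) =
    (fun y => (-1)*y + 5/3) '' (cantorval ∩ Set.Iio (2/3:ℝ)) := by
  apply Set.Subset.antisymm
  · rintro x ⟨hx, hgt⟩
    simp only [Set.mem_Ioi] at hgt
    refine ⟨5/3 - x, ⟨symm_mem hx, by simp only [Set.mem_Iio]; linarith⟩, by ring⟩
  · rintro x ⟨y, ⟨hy, hlt⟩, rfl⟩
    simp only [Set.mem_Iio] at hlt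
    have h := symm_mem hy
    show (-1)*y + 5/3 ∈ cantorval ∩ Set.Ioi (1:ℝ)
    have heq : (-1)*y + 5/3 = 5/3 - y := by ring
    rw [heq]
    exact ⟨h, by simp only [Set.mem_Ioi]; linarith⟩

lemma cover : cantorval = (cantorval ∩ Set.Iio (1/2:ℝ)) ∪
    ((cantorval ∩ Set.Icc (1/2:ℝ) (7/6)) ∪ (cantorval ∩ Set.Ioi (7/6:ℝ))) := by
  apply Set.Subset.antisymm
  · intro x hx
    by_cases h1 : x < 1/2
    · exact Or.inl ⟨hx, h1⟩
    by_cases h2 : x ≤ 7/6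
    · exact Or.inr (Or.inl ⟨hx, ⟨by linarith, h2⟩⟩)
    · exact Or.inr (Or.inr ⟨hx, by simp only [Set.mem_Ioi]; linarith⟩)
  · rintro x (⟨hx, _⟩ | (⟨hx, _⟩ | ⟨hx, _⟩)) <;> exact hx

lemma vol_fin_cv : volume cantorval ≠ ⊤ := by
  have h : volume cantorval ≤ volume (Set.Icc (0:ℝ) (5/3)) := measure_mono subset_Icc
  rw [Real.volume_Icc] at h
  exact (lt_of_le_of_lt h (by norm_num)).ne

lemma vol_fin_g : volume (cantorval ∩ Set.Iio (2/3:ℝ)) ≠ ⊤ := by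
  have h : volume (cantorval ∩ Set.Iio (2/3:ℝ)) ≤ volume cantorval :=
    measure_mono Set.inter_subset_left
  exact (h.trans_lt (lt_top_iff_ne_top.mpr vol_fin_cv)).ne

lemma vol_fin_Y : volume Yset ≠ ⊤ := by
  have hsub : Yset ⊆ Set.Icc (0:ℝ) (8/3) := by
    rintro t (ht | ⟨x, hx, rfl⟩)
    · have := subset_Icc ht; exact ⟨this.1, by linarith [this.2]⟩
    · have := subset_Icc hx
      exact ⟨by simp only; linarith [this.1], by simp only; linarith [this.2]⟩
  have h : volume Yset ≤ volume (Set.Icc (0:ℝ) (8/3)) := measure_mono hsub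
  rw [Real.volume_Icc] at h
  exact (lt_of_le_of_lt h (by norm_num)).ne

lemma vol_translate (c : ℝ) (s : Set ℝ) :
    volume ((fun x => c + x) '' s) = volume s := by
  have heq : (fun x : ℝ => c + x) = (fun y : ℝ => 1*y + c) := by funext y; ring
  rw [heq, vol_affine _ _ (by norm_num)]
  norm_num

-- the three key volume equations
lemma eqg : volume (cantorval ∩ Set.Iio (2/3:ℝ)) =
    ENNReal.ofReal (1/4) * volume cantorval +
      ENNReal.ofReal (1/4) * volume (cantorval ∩ Set.Iio (2/3:ℝ)) := by
  have hdisj : Disjoint ((fun y => (0 + y)/4) '' cantorval)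
      ((fun y => (2 + y)/4) '' (cantorval ∩ Set.Iio (2/3:ℝ))) := by
    rw [Set.disjoint_left]
    rintro x ⟨y, hy, rfl⟩ ⟨z, ⟨hz, _⟩, hzx⟩
    have hy5 := (subset_Icc hy).2
    have hz0 := (subset_Icc hz).1
    have : (0 + y)/4 ≤ 5/12 := by linarith
    have h2 : (2 + z)/4 ≥ 1/2 := by linarith
    simp only at hzx
    linarith [hzx ▸ h2]
  conv_lhs => rw [gsplit]
  rw [measure_union hdisj (meas_quarter 2 (meas_cv.inter measurableSet_Iio)),
    vol_quarter, vol_quarter]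

lemma eqY : volume Yset = volume (cantorval ∩ Set.Iio (2/3:ℝ)) +
    (ENNReal.ofReal (4/3) + volume (cantorval ∩ Set.Iio (2/3:ℝ))) := by
  have htrans : volume ((fun x => 1 + x) '' (cantorval ∩ Set.Ioi (1:ℝ))) =
      volume (cantorval ∩ Set.Iio (2/3:ℝ)) := by
    rw [vol_translate, hsym, vol_affine _ _ (by norm_num)]
    norm_num
  have hd1 : Disjoint (cantorval ∩ Set.Iio (2/3:ℝ))
      (Set.Icc (2/3:ℝ) 2 ∪ ((fun x => 1 + x) '' (cantorval ∩ Set.Ioi (1:ℝ)))) := by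
    rw [Set.disjoint_left]
    rintro x ⟨_, hlt⟩ (⟨h1, _⟩ | ⟨y, ⟨hy, hgt⟩, rfl⟩)
    · simp only [Set.mem_Iio] at hlt; linarith
    · simp only [Set.mem_Iio] at hlt
      simp only [Set.mem_Ioi] at hgt
      change (1:ℝ) + y < 2/3 at hlt
      linarith
  have hd2 : Disjoint (Set.Icc (2/3:ℝ) 2)
      ((fun x => 1 + x) '' (cantorval ∩ Set.Ioi (1:ℝ))) := by
    rw [Set.disjoint_left]
    rintro x ⟨_, h2⟩ ⟨y, ⟨hy, hgt⟩, rfl⟩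
    simp only [Set.mem_Ioi] at hgt
    change (1:ℝ) + y ≤ 2 at h2
    linarith
  have hm2 : MeasurableSet ((fun x => 1 + x) '' (cantorval ∩ Set.Ioi (1:ℝ))) := by
    have heq : (fun x : ℝ => 1 + x) = (fun y : ℝ => 1*y + 1) := by funext y; ring
    rw [heq]
    exact meas_affine _ _ (by norm_num) (meas_cv.inter measurableSet_Ioi)
  rw [Y_eq, measure_union hd1 (measurableSet_Icc.union hm2),
    measure_union hd2 hm2, htrans, Real.volume_Icc]
  norm_num

lemma eqMain : volume cantorval = ENNReal.ofReal (1/4) * volume cantorval +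
    (ENNReal.ofReal (1/4) * volume Yset + ENNReal.ofReal (1/4) * volume cantorval) := by
  have hd1 : Disjoint (cantorval ∩ Set.Iio (1/2:ℝ))
      ((cantorval ∩ Set.Icc (1/2:ℝ) (7/6)) ∪ (cantorval ∩ Set.Ioi (7/6:ℝ))) := by
    rw [Set.disjoint_left]
    rintro x ⟨_, hlt⟩ (⟨_, h1, _⟩ | ⟨_, h1⟩)
    · simp only [Set.mem_Iio] at hlt; linarith
    · simp only [Set.mem_Iio] at hlt
      simp only [Set.mem_Ioi] at h1
      linarith
  have hd2 : Disjoint (cantorval ∩ Set.Icc (1/2:ℝ) (7/6)) (cantorval ∩ Set.Ioi (7/6:ℝ)) := by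
    rw [Set.disjoint_left]
    rintro x ⟨_, _, h2⟩ ⟨_, h1⟩
    simp only [Set.mem_Ioi] at h1
    linarith
  have hmA : MeasurableSet (cantorval ∩ Set.Icc (1/2:ℝ) (7/6)) :=
    meas_cv.inter measurableSet_Icc
  have hmB : MeasurableSet (cantorval ∩ Set.Ioi (7/6:ℝ)) :=
    meas_cv.inter measurableSet_Ioi
  conv_lhs => rw [cover]
  rw [measure_union hd1 (hmA.union hmB), measure_union hd2 hmB,
    decomp_low, decomp_mid, decomp_high, vol_quarter, vol_quarter, vol_quarter]

theorem volume_cantorval : volume cantorval = 1 := by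
  have hμf := vol_fin_cv
  have hgf := vol_fin_g
  have hνf := vol_fin_Y
  have t1 : (volume (cantorval ∩ Set.Iio (2/3:ℝ))).toReal =
      1/4 * (volume cantorval).toReal +
        1/4 * (volume (cantorval ∩ Set.Iio (2/3:ℝ))).toReal := by
    conv_lhs => rw [eqg]
    rw [ENNReal.toReal_add (ENNReal.mul_ne_top ofReal_ne_top hμf)
      (ENNReal.mul_ne_top ofReal_ne_top hgf),
      ENNReal.toReal_mul, ENNReal.toReal_mul,
      ENNReal.toReal_ofReal (by norm_num : (0:ℝ) ≤ 1/4)]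
  have t2 : (volume Yset).toReal = (volume (cantorval ∩ Set.Iio (2/3:ℝ))).toReal +
      (4/3 + (volume (cantorval ∩ Set.Iio (2/3:ℝ))).toReal) := by
    conv_lhs => rw [eqY]
    rw [ENNReal.toReal_add hgf (ENNReal.add_ne_top.mpr ⟨ofReal_ne_top, hgf⟩),
      ENNReal.toReal_add ofReal_ne_top hgf, ENNReal.toReal_ofReal (by norm_num : (0:ℝ) ≤ 4/3)]
  have t3 : (volume cantorval).toReal = 1/4 * (volume cantorval).toReal +
      (1/4 * (volume Yset).toReal + 1/4 * (volume cantorval).toReal) := by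
    conv_lhs => rw [eqMain]
    rw [ENNReal.toReal_add (ENNReal.mul_ne_top ofReal_ne_top hμf)
      (ENNReal.add_ne_top.mpr ⟨ENNReal.mul_ne_top ofReal_ne_top hνf,
        ENNReal.mul_ne_top ofReal_ne_top hμf⟩),
      ENNReal.toReal_add (ENNReal.mul_ne_top ofReal_ne_top hνf)
        (ENNReal.mul_ne_top ofReal_ne_top hμf),
      ENNReal.toReal_mul, ENNReal.toReal_mul,
      ENNReal.toReal_ofReal (by norm_num : (0:ℝ) ≤ 1/4)]
  have hM1 : (volume cantorval).toReal = 1 := by linarith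
  calc volume cantorval = ENNReal.ofReal ((volume cantorval).toReal) :=
        (ENNReal.ofReal_toReal hμf).symm
    _ = 1 := by rw [hM1]; norm_num

end CV

theorem stmt11 :
    cantorval ⊆ Set.Icc 0 (5 / 3) ∧ MeasureTheory.volume cantorval = 1 :=
  ⟨CV.subset_Icc, CV.volume_cantorval⟩
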